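/- For P, Q ∈ Γ_n with 0 < r ≤ p_i/q_i ≤ R for all i, (2/(R+1))·I(P||Q) ≤ F(P||Q) ≤ (2/(r+1))·I(P||Q), where F(P||Q) = ∑p_i ln(2p_i/(p_i+q_i)) and I(P||Q) = (1/2)[F(P||Q) + F(Q||P)] is the Jensen-Shannon divergence. -/

import Mathlib

open Finset Real

noncomputable def phi (R t : ℝ) : ℝ :=
  R * (t * (Real.log 2 + Real.log t - Real.log (t+1))) - (Real.log 2 - Real.log (t+1))
    - (R+1)/2*(t-1)

noncomputable def phi' (R t : ℝ) : ℝ :=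
  R * ((Real.log 2 + Real.log t - Real.log (t+1)) + 1/(t+1)) + 1/(t+1) - (R+1)/2

lemma phi_hasDeriv (R t : ℝ) (ht : 0 < t) : HasDerivAt (phi R) (phi' R t) t := by
  have h1 : (0:ℝ) < t + 1 := by linarith
  have hl : HasDerivAt Real.log t⁻¹ t := Real.hasDerivAt_log ht.ne'
  have hl1 : HasDerivAt (fun x : ℝ => Real.log (x+1)) (t+1)⁻¹ t := by
    have := (Real.hasDerivAt_log h1.ne').comp t ((hasDerivAt_id t).add_const 1)
    rw [mul_one] at this
    exact this
  have hinner : HasDerivAt (fun x : ℝ => Real.log 2 + Real.log x - Real.log (x+1))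
      (t⁻¹ - (t+1)⁻¹) t := by
    have := ((hasDerivAt_const t (Real.log 2)).add hl).sub hl1
    rw [zero_add] at this
    exact this
  have hf : HasDerivAt (fun x : ℝ => x * (Real.log 2 + Real.log x - Real.log (x+1)))
      (1 * (Real.log 2 + Real.log t - Real.log (t+1)) + t * (t⁻¹ - (t+1)⁻¹)) t :=
    (hasDerivAt_id t).mul hinner
  have hF : HasDerivAt (phi R)
      (R * (1 * (Real.log 2 + Real.log t - Real.log (t+1)) + t * (t⁻¹ - (t+1)⁻¹))
        - (0 - (t+1)⁻¹) - ((R+1)/2 * 1)) t := by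
    exact ((hf.const_mul R).sub ((hasDerivAt_const t (Real.log 2)).sub hl1)).sub
      (((hasDerivAt_id t).sub_const 1).const_mul ((R+1)/2))
  convert hF using 1
  unfold phi'
  field_simp
  ring

lemma logub (x : ℝ) (hx : 0 < x) :
    Real.log 2 + Real.log x - Real.log (x+1) ≤ (x-1)/(x+1) := by
  have hx1 : (0:ℝ) < x + 1 := by linarith
  have h := Real.log_le_sub_one_of_pos (show (0:ℝ) < 2*x/(x+1) by positivity)
  rw [Real.log_div (by positivity) hx1.ne', Real.log_mul two_ne_zero hx.ne'] at h
  have e : 2*x/(x+1) - 1 = (x-1)/(x+1) := by field_simp; ring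
  linarith [e ▸ h]

lemma loglb (x : ℝ) (hx : 0 < x) :
    (x-1)/(2*x) ≤ Real.log 2 + Real.log x - Real.log (x+1) := by
  have hx1 : (0:ℝ) < x + 1 := by linarith
  have h := Real.log_le_sub_one_of_pos (show (0:ℝ) < (x+1)/(2*x) by positivity)
  rw [Real.log_div hx1.ne' (by positivity), Real.log_mul two_ne_zero hx.ne'] at h
  have e : (x+1)/(2*x) - 1 = -((x-1)/(2*x)) := by field_simp; ring
  linarith [e ▸ h]

lemma phi'_nonpos (R x : ℝ) (hR : 0 ≤ R) (hx : 0 < x) (h : (R-1)*(x-1) ≤ 0) :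
    phi' R x ≤ 0 := by
  have hx1 : (0:ℝ) < x + 1 := by linarith
  have h2 := mul_le_mul_of_nonneg_left (logub x hx) hR
  have key : R*((x-1)/(x+1)) + R*(1/(x+1)) + 1/(x+1) - (R+1)/2 ≤ 0 := by
    have e : R*((x-1)/(x+1)) + R*(1/(x+1)) + 1/(x+1) - (R+1)/2
        = ((R-1)*(x-1))/(2*(x+1)) := by field_simp; ring
    rw [e]
    exact div_nonpos_of_nonpos_of_nonneg h (by positivity)
  unfold phi'
  linarith

lemma phi'_nonneg (R x : ℝ) (hR : 0 ≤ R) (hx : 0 < x) (h : 0 ≤ (x-1)*(R-x)) :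
    0 ≤ phi' R x := by
  have hx1 : (0:ℝ) < x + 1 := by linarith
  have h2 := mul_le_mul_of_nonneg_left (loglb x hx) hR
  have key : 0 ≤ R*((x-1)/(2*x)) + R*(1/(x+1)) + 1/(x+1) - (R+1)/2 := by
    have e : R*((x-1)/(2*x)) + R*(1/(x+1)) + 1/(x+1) - (R+1)/2
        = ((x-1)*(R-x))/(2*x*(x+1)) := by field_simp; ring
    rw [e]
    exact div_nonneg h (by positivity)
  unfold phi'
  linarith

lemma phi_one (R : ℝ) : phi R 1 = 0 := by
  norm_num [phi]
lemma phi_mono_on (R a b : ℝ) (ha : 0 < a) (hab : a ≤ b)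
    (hd : ∀ x, a < x → x < b → 0 ≤ phi' R x) : phi R a ≤ phi R b := by
  have hmono : MonotoneOn (phi R) (Set.Icc a b) := by
    apply monotoneOn_of_deriv_nonneg (convex_Icc a b)
    · exact fun x hx => (phi_hasDeriv R x (lt_of_lt_of_le ha hx.1)).continuousAt.continuousWithinAt
    · intro x hx
      rw [interior_Icc] at hx
      exact (phi_hasDeriv R x (ha.trans hx.1)).differentiableAt.differentiableWithinAt
    · intro x hx
      rw [interior_Icc] at hx
      rw [(phi_hasDeriv R x (ha.trans hx.1)).deriv]
      exact hd x hx.1 hx.2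
  exact hmono (Set.mem_Icc.2 ⟨le_refl a, hab⟩) (Set.mem_Icc.2 ⟨hab, le_refl b⟩) hab

lemma phi_anti_on (R a b : ℝ) (ha : 0 < a) (hab : a ≤ b)
    (hd : ∀ x, a < x → x < b → phi' R x ≤ 0) : phi R b ≤ phi R a := by
  have hmono : AntitoneOn (phi R) (Set.Icc a b) := by
    apply antitoneOn_of_deriv_nonpos (convex_Icc a b)
    · exact fun x hx => (phi_hasDeriv R x (lt_of_lt_of_le ha hx.1)).continuousAt.continuousWithinAt
    · intro x hx
      rw [interior_Icc] at hx
      exact (phi_hasDeriv R x (ha.trans hx.1)).differentiableAt.differentiableWithinAt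
    · intro x hx
      rw [interior_Icc] at hx
      rw [(phi_hasDeriv R x (ha.trans hx.1)).deriv]
      exact hd x hx.1 hx.2
  exact hmono (Set.mem_Icc.2 ⟨le_refl a, hab⟩) (Set.mem_Icc.2 ⟨hab, le_refl b⟩) hab

lemma phi_nonneg (R t : ℝ) (hR : 1 ≤ R) (ht : 0 < t) (htR : t ≤ R) : 0 ≤ phi R t := by
  rcases le_total t 1 with h | h
  · have := phi_anti_on R t 1 ht h (fun x hx1 hx2 =>
      phi'_nonpos R x (by linarith) (ht.trans hx1)
        (mul_nonpos_of_nonneg_of_nonpos (by linarith) (by linarith)))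
    rw [phi_one] at this; exact this
  · have := phi_mono_on R 1 t one_pos h (fun x hx1 hx2 =>
      phi'_nonneg R x (by linarith) (by linarith)
        (mul_nonneg (by linarith) (by linarith)))
    rw [phi_one] at this; exact this

lemma phi_nonpos (r t : ℝ) (hr : 0 < r) (hr1 : r ≤ 1) (hrt : r ≤ t) : phi r t ≤ 0 := by
  rcases le_total t 1 with h | h
  · have ht : 0 < t := lt_of_lt_of_le hr hrt
    have := phi_mono_on r t 1 ht h (fun x hx1 hx2 =>
      phi'_nonneg r x hr.le (ht.trans hx1)
        (by nlinarith))
    rw [phi_one] at this; exact this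
  · have := phi_anti_on r 1 t one_pos h (fun x hx1 hx2 =>
      phi'_nonpos r x hr.le (by linarith)
        (mul_nonpos_of_nonpos_of_nonneg (by linarith) (by linarith)))
    rw [phi_one] at this; exact this
lemma phi_eq (R p q : ℝ) (hp : 0 < p) (hq : 0 < q) :
    q * phi R (p/q) = R * (p * Real.log (2*p/(p+q))) - q * Real.log (2*q/(p+q))
      - (R+1)/2*(p-q) := by
  have hpq : (0:ℝ) < p + q := by linarith
  have h1 : Real.log (p/q) = Real.log p - Real.log q := Real.log_div hp.ne' hq.ne'
  have h2 : Real.log (p/q + 1) = Real.log (p+q) - Real.log q := by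
    rw [div_add_one hq.ne', Real.log_div hpq.ne' hq.ne']
  have h3 : Real.log (2*p/(p+q)) = Real.log 2 + Real.log p - Real.log (p+q) := by
    rw [Real.log_div (by positivity) hpq.ne', Real.log_mul two_ne_zero hp.ne']
  have h4 : Real.log (2*q/(p+q)) = Real.log 2 + Real.log q - Real.log (p+q) := by
    rw [Real.log_div (by positivity) hpq.ne', Real.log_mul two_ne_zero hq.ne']
  rw [phi, h1, h2, h3, h4]
  field_simp
  ring

lemma pointA (R p q : ℝ) (hp : 0 < p) (hq : 0 < q) (hR : 1 ≤ R) (h : p/q ≤ R) :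
    q * Real.log (2*q/(p+q)) ≤ R * (p * Real.log (2*p/(p+q))) - (R+1)/2*(p-q) := by
  have := mul_nonneg hq.le (phi_nonneg R (p/q) hR (by positivity) h)
  rw [phi_eq R p q hp hq] at this
  linarith

lemma pointB (r p q : ℝ) (hp : 0 < p) (hq : 0 < q) (hr : 0 < r) (hr1 : r ≤ 1)
    (h : r ≤ p/q) :
    r * (p * Real.log (2*p/(p+q))) - (r+1)/2*(p-q) ≤ q * Real.log (2*q/(p+q)) := by
  have := mul_nonpos_of_nonneg_of_nonpos hq.le (phi_nonpos r (p/q) hr hr1 h)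
  rw [phi_eq r p q hp hq] at this
  linarith

theorem stmt12 (n : ℕ) (p q : Fin n → ℝ)
    (hp : ∀ i, 0 < p i) (hq : ∀ i, 0 < q i)
    (hp1 : ∑ i, p i = 1) (hq1 : ∑ i, q i = 1)
    (r R : ℝ) (hr : 0 < r) (hrR : ∀ i, r ≤ p i / q i ∧ p i / q i ≤ R) :
    (2/(R+1)) * (((1:ℝ)/2) * ∑ i, (p i * Real.log (2 * p i / (p i + q i)) + q i * Real.log (2 * q i / (p i + q i)))) ≤ (∑ i, p i * Real.log (2 * p i / (p i + q i))) ∧ (∑ i, p i * Real.log (2 * p i / (p i + q i))) ≤ (2/(r+1)) * (((1:ℝ)/2) * ∑ i, (p i * Real.log (2 * p i / (p i + q i)) + q i * Real.log (2 * q i / (p i + q i)))) := by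
  have hn : n ≠ 0 := by
    rintro rfl
    simp at hp1
  have hne : (Finset.univ : Finset (Fin n)).Nonempty := by
    simpa [Finset.univ_nonempty_iff] using Fin.pos_iff_nonempty.mp (Nat.pos_of_ne_zero hn)
  -- R ≥ 1
  have hR1 : 1 ≤ R := by
    by_contra hc
    push_neg at hc
    have : ∀ i ∈ Finset.univ, p i < q i := by
      intro i _
      have h1 := (hrR i).2
      have := (div_lt_one (hq i)).mp (lt_of_le_of_lt h1 hc)
      linarith
    have := Finset.sum_lt_sum_of_nonempty hne this
    rw [hp1, hq1] at this
    exact lt_irrefl 1 this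
  have hr1 : r ≤ 1 := by
    by_contra hc
    push_neg at hc
    have : ∀ i ∈ Finset.univ, q i < p i := by
      intro i _
      have h1 := (hrR i).1
      have := (one_lt_div (hq i)).mp (lt_of_lt_of_le hc h1)
      linarith
    have := Finset.sum_lt_sum_of_nonempty hne this
    rw [hp1, hq1] at this
    exact lt_irrefl 1 this
  set F := ∑ i, p i * Real.log (2 * p i / (p i + q i)) with hF
  set G := ∑ i, q i * Real.log (2 * q i / (p i + q i)) with hG
  have hsplit : ∑ i, (p i * Real.log (2 * p i / (p i + q i))
      + q i * Real.log (2 * q i / (p i + q i))) = F + G := by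
    rw [Finset.sum_add_distrib]
  have hpq0 : ∑ i, (p i - q i) = 0 := by
    rw [Finset.sum_sub_distrib, hp1, hq1]; ring
  -- G ≤ R * F
  have hGRF : G ≤ R * F := by
    have h1 : G ≤ ∑ i, (R * (p i * Real.log (2 * p i / (p i + q i))) - (R+1)/2*(p i - q i)) :=
      Finset.sum_le_sum fun i _ => pointA R (p i) (q i) (hp i) (hq i) hR1 (hrR i).2
    have h2 : ∑ i, (R * (p i * Real.log (2 * p i / (p i + q i))) - (R+1)/2*(p i - q i))
        = R * F - (R+1)/2 * ∑ i, (p i - q i) := by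
      rw [Finset.sum_sub_distrib, ← Finset.mul_sum, ← Finset.mul_sum]
    rw [h2, hpq0] at h1
    linarith
  -- r * F ≤ G
  have hrFG : r * F ≤ G := by
    have h1 : ∑ i, (r * (p i * Real.log (2 * p i / (p i + q i))) - (r+1)/2*(p i - q i)) ≤ G :=
      Finset.sum_le_sum fun i _ => pointB r (p i) (q i) (hp i) (hq i) hr hr1 (hrR i).1
    have h2 : ∑ i, (r * (p i * Real.log (2 * p i / (p i + q i))) - (r+1)/2*(p i - q i))
        = r * F - (r+1)/2 * ∑ i, (p i - q i) := by
      rw [Finset.sum_sub_distrib, ← Finset.mul_sum, ← Finset.mul_sum]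
    rw [h2, hpq0] at h1
    linarith
  have hRpos : (0:ℝ) < R + 1 := by linarith
  have hrpos : (0:ℝ) < r + 1 := by linarith
  constructor
  · rw [hsplit]
    rw [show (2/(R+1)) * ((1:ℝ)/2 * (F + G)) = (F+G)/(R+1) by ring]
    rw [div_le_iff₀ hRpos]
    nlinarith
  · rw [hsplit]
    rw [show (2/(r+1)) * ((1:ℝ)/2 * (F + G)) = (F+G)/(r+1) by ring]
    rw [le_div_iff₀ hrpos]
    nlinarith
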